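/- Let (P^n_t)_{t≥0}, n ∈ ℕ, be strongly continuous semigroups on a Banach space Z with generators A^n, and suppose there are uniform constants M ≥ 1 and ω ∈ ℝ with ‖P^n_t‖_{L(Z)} ≤ M exp(ωt) for all t ≥ 0 and all n. Let D ⊆ ∩_n dom(A^n) be a dense subspace such that: (i) D is invariant under all P^n_t; (ii) there is a norm ‖·‖_D on D and constants M_D ≥ 1, ω_D ∈ ℝ with ‖P^n_t f‖_D ≤ M_D exp(ω_D t) ‖f‖_D for all t ≥ 0, n, f ∈ D; (iii) there are numbers a_{nm} with a_{nm} → 0 as n, m → ∞ and ‖A^n f − A^m f‖ ≤ a_{nm} ‖f‖_D for all f ∈ D and all n, m. Then there exists a strongly continuous semigroup (P^∞_t)_{t≥0} on Z with ‖P^∞_t‖_{L(Z)} ≤ M exp(ωt) such that lim_{n→∞} P^n_t f = P^∞_t f for every f ∈ Z, uniformly on compact intervals in t and on bounded subsets of D; moreover there is a locally bounded function t ↦ C_t such that ‖P^n_t f − P^m_t f‖ ≤ C_t a_{nm} ‖f‖_D for all f ∈ D. If in addition Z = 𝓑^ρ(X) for a weighted space (X, ρ) and every (P^n_t) is a generalized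 Feller semigroup, then (P^∞_t) is a generalized Feller semigroup. -/

import Mathlib

open MeasureTheory Filter Set Topology

namespace GenFeller

variable {X : Type*} [TopologicalSpace X]

/-- `ρ` is an admissible weight function on `X`: positive with compact sublevel sets. -/
def Admissible (ρ : X → ℝ) : Prop :=
  (∀ x, 0 < ρ x) ∧ ∀ R : ℝ, 0 < R → IsCompact {x : X | ρ x ≤ R}

/-- The weighted sup-norm `‖f‖_ρ = sup_x ρ(x)⁻¹ |f x|`. -/
noncomputable def rnorm (ρ : X → ℝ) (f : X → ℝ) : ℝ :=
  sSup (Set.range fun x => (ρ x)⁻¹ * |f x|)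

/-- `f ∈ B^ρ(X)`. -/
def MemB (ρ : X → ℝ) (f : X → ℝ) : Prop :=
  ∃ C : ℝ, ∀ x, |f x| ≤ C * ρ x

/-- `f ∈ 𝓑^ρ(X)`: `f ∈ B^ρ(X)` and `f` lies in the `‖·‖_ρ`-closure of the bounded
continuous functions. -/
def MemCb (ρ : X → ℝ) (f : X → ℝ) : Prop :=
  MemB ρ f ∧ ∀ ε : ℝ, 0 < ε → ∃ g : X → ℝ, Continuous g ∧ (∃ C : ℝ, ∀ x, |g x| ≤ C) ∧
    ∀ x, |f x - g x| ≤ ε * ρ x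

/-- `T` is linear on `𝓑^ρ(X)`. -/
def LinOn (ρ : X → ℝ) (T : (X → ℝ) → (X → ℝ)) : Prop :=
  (∀ f g, MemCb ρ f → MemCb ρ g → T (f + g) = T f + T g) ∧
  (∀ (c : ℝ) (f), MemCb ρ f → T (c • f) = c • T f)

/-- `‖T f‖_ρ ≤ C ‖f‖_ρ` for all `f ∈ 𝓑^ρ(X)`, stated pointwise. -/
def OpBound (ρ : X → ℝ) (T : (X → ℝ) → (X → ℝ)) (C : ℝ) : Prop :=
  ∀ f, MemCb ρ f → ∀ x, |T f x| ≤ C * rnorm ρ f * ρ x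

/-- A generalized Feller semigroup on `𝓑^ρ(X)` (properties F1–F5). -/
structure IsGenFeller (ρ : X → ℝ) (P : ℝ → (X → ℝ) → (X → ℝ)) : Prop where
  maps : ∀ t, 0 ≤ t → ∀ f, MemCb ρ f → MemCb ρ (P t f)
  lin : ∀ t, 0 ≤ t → LinOn ρ (P t)
  id0 : ∀ f, MemCb ρ f → P 0 f = f
  law : ∀ s t, 0 ≤ s → 0 ≤ t → ∀ f, MemCb ρ f → P (t + s) f = P t (P s f)
  ptconv : ∀ f, MemCb ρ f → ∀ x,
    Tendsto (fun t => P t f x) (nhdsWithin 0 (Set.Ioi 0)) (nhds (f x))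
  locbdd : ∃ C : ℝ, ∃ ε : ℝ, 0 < ε ∧ ∀ t ∈ Set.Icc (0:ℝ) ε, OpBound ρ (P t) C
  pos : ∀ t, 0 ≤ t → ∀ f, MemCb ρ f → (∀ x, 0 ≤ f x) → ∀ x, 0 ≤ P t f x

/-- `‖P_t‖ ≤ M exp(ω t)` for all `t ≥ 0`. -/
def GrowthBound (ρ : X → ℝ) (P : ℝ → (X → ℝ) → (X → ℝ)) (M ω : ℝ) : Prop :=
  ∀ t, 0 ≤ t → OpBound ρ (P t) (M * Real.exp (ω * t))

/-- `g` is the value of the generator of `P` at `f` (limit in `‖·‖_ρ`). -/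
def IsGenerator (ρ : X → ℝ) (P : ℝ → (X → ℝ) → (X → ℝ)) (f g : X → ℝ) : Prop :=
  MemCb ρ f ∧ MemCb ρ g ∧
  Tendsto (fun t : ℝ => rnorm ρ (fun x => t⁻¹ * (P t f x - f x) - g x))
    (nhdsWithin 0 (Set.Ioi 0)) (nhds 0)

/-- `D` is a set of elements of `𝓑^ρ(X)` which is `‖·‖_ρ`-dense in it. -/
def DenseIn (ρ : X → ℝ) (D : Set (X → ℝ)) : Prop :=
  (∀ f ∈ D, MemCb ρ f) ∧
  ∀ f, MemCb ρ f → ∀ ε : ℝ, 0 < ε → ∃ h ∈ D, rnorm ρ (fun x => f x - h x) ≤ ε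

/-- Operator norm of a linear functional on `𝓑^ρ(X)`. -/
noncomputable def opNormF (ρ : X → ℝ) (ℓ : (X → ℝ) → ℝ) : ℝ :=
  sSup {r : ℝ | ∃ f, MemCb ρ f ∧ rnorm ρ f ≤ 1 ∧ r = |ℓ f|}

/-- Operator norm of an operator on `𝓑^ρ(X)`. -/
noncomputable def opNormOp (ρ : X → ℝ) (B : (X → ℝ) → (X → ℝ)) : ℝ :=
  sSup {r : ℝ | ∃ f, MemCb ρ f ∧ rnorm ρ f ≤ 1 ∧ r = rnorm ρ (B f)}

end GenFeller

open Filter Set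

universe u v

section AuxHelpers

open Filter Topology

private lemma tendsto_of_norm_bound {α : Type*} {E : Type*} [NormedAddCommGroup E] {l : Filter α}
    {f : α → E} {c : E} {g : α → ℝ} (hg : Tendsto g l (nhds 0))
    (h : ∀ᶠ x in l, ‖f x - c‖ ≤ g x) : Tendsto f l (nhds c) :=
  tendsto_sub_nhds_zero_iff.mp (squeeze_zero_norm' h hg)

private lemma div_bound_aux {x ε c : ℝ} (hx : 0 ≤ x) (hε : 0 < ε) (hc : 0 < c) :
    x * (ε / (c * (x + 1))) ≤ ε / c := by
  rw [mul_comm, div_mul_eq_mul_div, div_le_div_iff₀ (by positivity) hc]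
  nlinarith

private lemma norm_add4_le {E : Type*} [NormedAddCommGroup E] (a b c d : E) :
    ‖a + b + c + d‖ ≤ ‖a‖ + ‖b‖ + ‖c‖ + ‖d‖ :=
  (norm_add_le _ _).trans (by
    have h1 : ‖a + b + c‖ ≤ ‖a‖ + ‖b‖ + ‖c‖ :=
      (norm_add_le _ _).trans (add_le_add_left (norm_add_le _ _) _)
    linarith)

private lemma norm_sub_tendsto_zero {α : Type*} {E : Type*} [NormedAddCommGroup E]
    {l : Filter α} {f : α → E} {c : E} (h : Tendsto f l (nhds c)) :
    Tendsto (fun x => ‖f x - c‖) l (nhds 0) := by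
  have h2 : Tendsto (fun x => f x - c) l (nhds (c - c)) := h.sub tendsto_const_nhds
  rw [sub_self] at h2
  simpa using h2.norm

private lemma norm_sub_tendsto_zero' {α : Type*} {E : Type*} [NormedAddCommGroup E]
    {l : Filter α} {f : α → E} {c : E} (h : Tendsto f l (nhds c)) :
    Tendsto (fun x => ‖c - f x‖) l (nhds 0) := by
  have h2 : Tendsto (fun x => c - f x) l (nhds (c - c)) := tendsto_const_nhds.sub h
  rw [sub_self] at h2
  simpa using h2.norm

private lemma norm_add3_le {E : Type*} [NormedAddCommGroup E] (a b c : E) :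
    ‖a + b + c‖ ≤ ‖a‖ + ‖b‖ + ‖c‖ :=
  (norm_add_le _ _).trans (add_le_add_left (norm_add_le _ _) _)

end AuxHelpers

set_option maxHeartbeats 2000000 in

/-- Theorem 3.1 (approximation of semigroups): given strongly continuous semigroups
`(P^n_t)` on a Banach space `Z` with uniform growth bound `M exp(ω t)`, a dense
subspace `D ⊆ ∩_n dom(A^n)` invariant under all `P^n` carrying a norm `nD` with a
uniform growth bound, such that `‖A^n f − A^m f‖ ≤ a_{nm} ‖f‖_D` with `a_{nm} → 0`,
there is a strongly continuous limiting semigroup `(P^∞_t)` with the same growth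
bound, limit of the `P^n` uniformly on compact time intervals (for each `f ∈ Z`) and
uniformly on bounded sets of `D`, with rate `O(a_{nm})` on `D`.  If moreover
`Z = 𝓑^ρ(X)` for a weighted space `(X, ρ)` and each `P^n` is positive (hence a
generalized Feller semigroup), then so is the limit. -/
theorem approximation_semigroups
    {Z : Type v} [NormedAddCommGroup Z] [NormedSpace ℝ Z] [CompleteSpace Z]
    (P : ℕ → ℝ → Z →L[ℝ] Z)
    (hid : ∀ n, P n 0 = ContinuousLinearMap.id ℝ Z)
    (hlaw : ∀ n s t, 0 ≤ s → 0 ≤ t → P n (t + s) = (P n t).comp (P n s))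
    (hcont : ∀ n (f : Z), Tendsto (fun t => P n t f) (nhdsWithin 0 (Set.Ioi 0)) (nhds f))
    (M ω : ℝ) (hM : 1 ≤ M)
    (hgb : ∀ n t, 0 ≤ t → ‖P n t‖ ≤ M * Real.exp (ω * t))
    (D : Submodule ℝ Z) (hDdense : Dense (D : Set Z))
    (A : ℕ → Z → Z)
    (hgen : ∀ n, ∀ f ∈ D, Tendsto (fun t : ℝ => t⁻¹ • (P n t f - f))
      (nhdsWithin 0 (Set.Ioi 0)) (nhds (A n f)))
    (hinv : ∀ n t, 0 ≤ t → ∀ f ∈ D, P n t f ∈ D)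
    (nD : Z → ℝ)
    (hnD0 : ∀ f ∈ D, 0 ≤ nD f)
    (hnDdef : ∀ f ∈ D, nD f = 0 → f = 0)
    (hnDsmul : ∀ (c : ℝ), ∀ f ∈ D, nD (c • f) = |c| * nD f)
    (hnDtri : ∀ f ∈ D, ∀ g ∈ D, nD (f + g) ≤ nD f + nD g)
    (MD ωD : ℝ) (hMD : 1 ≤ MD)
    (hgbD : ∀ n t, 0 ≤ t → ∀ f ∈ D, nD (P n t f) ≤ MD * Real.exp (ωD * t) * nD f)
    (a : ℕ → ℕ → ℝ)
    (ha0 : Tendsto (fun p : ℕ × ℕ => a p.1 p.2) atTop (nhds 0))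
    (haA : ∀ n m, ∀ f ∈ D, ‖A n f - A m f‖ ≤ a n m * nD f) :
    ∃ Pinf : ℝ → Z →L[ℝ] Z,
      Pinf 0 = ContinuousLinearMap.id ℝ Z ∧
      (∀ s t, 0 ≤ s → 0 ≤ t → Pinf (t + s) = (Pinf t).comp (Pinf s)) ∧
      (∀ f : Z, Tendsto (fun t => Pinf t f) (nhdsWithin 0 (Set.Ioi 0)) (nhds f)) ∧
      (∀ t, 0 ≤ t → ‖Pinf t‖ ≤ M * Real.exp (ω * t)) ∧
      (∀ f : Z, ∀ T : ℝ, 0 < T → ∀ ε : ℝ, 0 < ε → ∃ N : ℕ, ∀ n ≥ N,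
        ∀ t ∈ Set.Icc (0:ℝ) T, ‖P n t f - Pinf t f‖ ≤ ε) ∧
      (∀ T : ℝ, 0 < T → ∀ K : ℝ, 0 < K → ∀ ε : ℝ, 0 < ε → ∃ N : ℕ, ∀ n ≥ N,
        ∀ f ∈ D, nD f ≤ K → ∀ t ∈ Set.Icc (0:ℝ) T, ‖P n t f - Pinf t f‖ ≤ ε) ∧
      (∃ C : ℝ → ℝ, (∀ T : ℝ, 0 < T → ∃ c : ℝ, ∀ t ∈ Set.Icc (0:ℝ) T, C t ≤ c) ∧
        ∀ n m t, 0 ≤ t → ∀ f ∈ D, ‖P n t f - P m t f‖ ≤ C t * a n m * nD f) ∧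
      (∀ (X : Type u) (_ : TopologicalSpace X) (ρ : X → ℝ) (ι : Z → X → ℝ),
        GenFeller.Admissible ρ →
        (∀ f g : Z, ι (f + g) = ι f + ι g) →
        (∀ (c : ℝ) (f : Z), ι (c • f) = c • ι f) →
        (∀ f : Z, GenFeller.MemCb ρ (ι f)) →
        (∀ f : Z, GenFeller.rnorm ρ (ι f) = ‖f‖) →
        (∀ g : X → ℝ, GenFeller.MemCb ρ g → ∃ f : Z, ι f = g) →
        (∀ n t, 0 ≤ t → ∀ f : Z, (∀ x, 0 ≤ ι f x) → ∀ x, 0 ≤ ι (P n t f) x) →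
        ∀ t, 0 ≤ t → ∀ f : Z, (∀ x, 0 ≤ ι f x) → ∀ x, 0 ≤ ι (Pinf t f) x) := by
  classical
  have hM0 : (0:ℝ) < M := lt_of_lt_of_le one_pos hM
  have hMD0 : (0:ℝ) < MD := lt_of_lt_of_le one_pos hMD
  have hPid : ∀ n (f : Z), P n 0 f = f := by
    intro n f; rw [hid n]; rfl
  have hlaw' : ∀ n s t, 0 ≤ s → 0 ≤ t → ∀ f : Z, P n (t + s) f = P n t (P n s f) := by
    intro n s t hs ht f; rw [hlaw n s t hs ht]; rfl
  have hgbop : ∀ n t, 0 ≤ t → ∀ f : Z, ‖P n t f‖ ≤ M * Real.exp (ω * t) * ‖f‖ := by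
    intro n t ht f
    exact ((P n t).le_opNorm f).trans (mul_le_mul_of_nonneg_right (hgb n t ht) (norm_nonneg f))
  set E : ℝ → ℝ := fun T => M * Real.exp (|ω| * T) with hE
  have hEpos : ∀ T, 0 < E T := fun T => mul_pos hM0 (Real.exp_pos _)
  have hEbd : ∀ n s T, 0 ≤ s → s ≤ T → ∀ f : Z, ‖P n s f‖ ≤ E T * ‖f‖ := by
    intro n s T hs hsT f
    refine (hgbop n s hs f).trans (mul_le_mul_of_nonneg_right ?_ (norm_nonneg f))
    have h1 : ω * s ≤ |ω| * T := by nlinarith [le_abs_self ω, abs_nonneg ω]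
    exact mul_le_mul_of_nonneg_left (Real.exp_le_exp.2 h1) hM0.le
  -- right continuity at 0 within `Ici 0`
  have hcont0 : ∀ n (u : Z), Tendsto (fun h => P n h u) (nhdsWithin 0 (Set.Ici (0:ℝ))) (nhds u) := by
    intro n u
    rw [← Set.Ioi_insert, nhdsWithin_insert, tendsto_sup]
    refine ⟨tendsto_pure_left.mpr fun s hs => ?_, hcont n u⟩
    rw [hPid]; exact mem_of_mem_nhds hs
  -- filter maps
  have hmapRc : ∀ s : ℝ, Tendsto (fun y => y - s) (nhdsWithin s (Set.Ici s))
      (nhdsWithin 0 (Set.Ici (0:ℝ))) := by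
    intro s
    have h1 : ContinuousWithinAt (fun y => y - s) (Set.Ici s) s :=
      (continuous_id.sub continuous_const).continuousWithinAt
    have h2 : Set.MapsTo (fun y => y - s) (Set.Ici s) (Set.Ici (0:ℝ)) := fun y hy =>
      Set.mem_Ici.2 (sub_nonneg.2 hy)
    simpa using h1.tendsto_nhdsWithin h2
  have hmapR : ∀ s : ℝ, Tendsto (fun y => y - s) (nhdsWithin s (Set.Ioi s))
      (nhdsWithin 0 (Set.Ioi (0:ℝ))) := by
    intro s
    have h1 : ContinuousWithinAt (fun y => y - s) (Set.Ioi s) s :=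
      (continuous_id.sub continuous_const).continuousWithinAt
    have h2 : Set.MapsTo (fun y => y - s) (Set.Ioi s) (Set.Ioi (0:ℝ)) := fun y hy =>
      Set.mem_Ioi.2 (sub_pos.2 hy)
    simpa using h1.tendsto_nhdsWithin h2
  have hmapL : ∀ s : ℝ, Tendsto (fun y => s - y) (nhdsWithin s (Set.Iic s))
      (nhdsWithin 0 (Set.Ici (0:ℝ))) := by
    intro s
    have h1 : ContinuousWithinAt (fun y => s - y) (Set.Iic s) s :=
      (continuous_const.sub continuous_id).continuousWithinAt
    have h2 : Set.MapsTo (fun y => s - y) (Set.Iic s) (Set.Ici (0:ℝ)) := fun y hy =>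
      Set.mem_Ici.2 (sub_nonneg.2 hy)
    simpa using h1.tendsto_nhdsWithin h2
  -- orbit continuity from the right
  have horbR : ∀ n (f : Z) s, 0 ≤ s →
      Tendsto (fun y => P n y f) (nhdsWithin s (Set.Ici s)) (nhds (P n s f)) := by
    intro n f s hs
    have heq : ∀ y ∈ Set.Ici s, P n y f = P n (y - s) (P n s f) := by
      intro y hy
      have h := hlaw' n s (y - s) hs (sub_nonneg.2 hy) f
      rwa [sub_add_cancel] at h
    have heq2 : (fun y => P n (y - s) (P n s f)) =ᶠ[nhdsWithin s (Set.Ici s)]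
        (fun y => P n y f) := eventually_nhdsWithin_of_forall fun y hy => (heq y hy).symm
    exact Tendsto.congr' heq2 ((hcont0 n (P n s f)).comp (hmapRc s))
  -- orbit continuity from the left
  have horbL : ∀ n (f : Z) s T, 0 ≤ s → s ≤ T →
      Tendsto (fun y => P n y f) (nhdsWithin s (Set.Icc 0 s)) (nhds (P n s f)) := by
    intro n f s T hs hsT
    refine tendsto_of_norm_bound (g := fun y => E T * ‖P n (s - y) f - f‖) ?_ ?_
    · have h1 : Tendsto (fun y => P n (s - y) f) (nhdsWithin s (Set.Icc 0 s)) (nhds f) :=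
        (hcont0 n f).comp ((hmapL s).mono_left (nhdsWithin_mono s Set.Icc_subset_Iic_self))
      have h2 : Tendsto (fun y => E T * ‖P n (s - y) f - f‖) (nhdsWithin s (Set.Icc 0 s))
          (nhds (E T * ‖f - f‖)) := (((h1.sub tendsto_const_nhds).norm).const_mul _)
      simpa using h2
    · refine eventually_nhdsWithin_of_forall ?_
      intro y hy
      have hys : 0 ≤ s - y := sub_nonneg.2 hy.2
      have hident : P n s f = P n y (P n (s - y) f) := by
        have h := hlaw' n (s - y) y hys hy.1 f
        have h2 : y + (s - y) = s := by ring
        rwa [h2] at h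
      have h3 : P n y f - P n s f = P n y (f - P n (s - y) f) := by
        rw [map_sub, hident]
      rw [h3]
      calc ‖P n y (f - P n (s - y) f)‖ ≤ E T * ‖f - P n (s - y) f‖ :=
            hEbd n y T hy.1 (hy.2.trans hsT) _
        _ = E T * ‖P n (s - y) f - f‖ := by rw [norm_sub_rev]
  -- the quantitative comparison function
  set Cfun : ℝ → ℝ := fun t => M * Real.exp (|ω| * t) * (MD * Real.exp (|ωD| * t)) * t
    with hCfun
  have hCnonneg : ∀ t, 0 ≤ t → 0 ≤ Cfun t := by
    intro t ht
    have := Real.exp_pos (|ω| * t)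
    have := Real.exp_pos (|ωD| * t)
    positivity
  have hCmono : ∀ T t, 0 ≤ t → t ≤ T → Cfun t ≤ Cfun T := by
    intro T t ht htT
    have h1 : Real.exp (|ω| * t) ≤ Real.exp (|ω| * T) :=
      Real.exp_le_exp.2 (mul_le_mul_of_nonneg_left htT (abs_nonneg ω))
    have h2 : Real.exp (|ωD| * t) ≤ Real.exp (|ωD| * T) :=
      Real.exp_le_exp.2 (mul_le_mul_of_nonneg_left htT (abs_nonneg ωD))
    have e1 := Real.exp_pos (|ω| * t)
    have e2 := Real.exp_pos (|ωD| * t)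
    have e3 := Real.exp_pos (|ω| * T)
    have e4 := Real.exp_pos (|ωD| * T)
    simp only [hCfun]
    gcongr <;> positivity
  -- the key quantitative estimate
  have hkey : ∀ n m t, 0 ≤ t → ∀ f ∈ D, ‖P n t f - P m t f‖ ≤ Cfun t * a n m * nD f := by
    intro n m t ht f hfD
    by_cases hf0 : nD f = 0
    · have hf : f = 0 := hnDdef f hfD hf0
      rw [hf] at hf0 ⊢
      simp [hf0]
    have hnDf : 0 < nD f := lt_of_le_of_ne (hnD0 f hfD) (Ne.symm hf0)
    have hanm : 0 ≤ a n m := by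
      have h1 := haA n m f hfD
      have h2 := norm_nonneg (A n f - A m f)
      nlinarith
    have hnDu : ∀ s, s ∈ Set.Icc 0 t → nD (P n s f) ≤ MD * Real.exp (|ωD| * t) * nD f := by
      intro s hs
      refine (hgbD n s hs.1 f hfD).trans ?_
      have h1 : Real.exp (ωD * s) ≤ Real.exp (|ωD| * t) := by
        refine Real.exp_le_exp.2 ?_
        nlinarith [le_abs_self ωD, abs_nonneg ωD, hs.1, hs.2]
      exact mul_le_mul_of_nonneg_right (mul_le_mul_of_nonneg_left h1 hMD0.le) (hnD0 f hfD)
    have hwbd : ∀ s, s ∈ Set.Icc 0 t →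
        ‖A n (P n s f) - A m (P n s f)‖ ≤ a n m * (MD * Real.exp (|ωD| * t) * nD f) := by
      intro s hs
      exact (haA n m (P n s f) (hinv n s hs.1 f hfD)).trans
        (mul_le_mul_of_nonneg_left (hnDu s hs) hanm)
    -- continuity of the interpolation map on [0, t]
    have hgcont : ContinuousOn (fun s => P m (t - s) (P n s f)) (Set.Icc 0 t) := by
      intro s hs
      have hsplit : nhdsWithin s (Set.Icc 0 t) ≤
          nhdsWithin s (Set.Icc 0 s) ⊔ nhdsWithin s (Set.Icc s t) := by
        rw [← nhdsWithin_union]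
        refine nhdsWithin_mono s ?_
        intro y hy
        rcases le_total y s with h | h
        · exact Or.inl ⟨hy.1, h⟩
        · exact Or.inr ⟨h, hy.2⟩
      have hL : Tendsto (fun s' => P m (t - s') (P n s' f)) (nhdsWithin s (Set.Icc 0 s))
          (nhds (P m (t - s) (P n s f))) := by
        refine tendsto_of_norm_bound
          (g := fun y => E t *
            ((E t * ‖P n y f - P n s f‖ + ‖P m (s - y) (P n s f) - P n s f‖
                + ‖P n s f - P n y f‖)
              + (E t * ‖P n y f - P n s f‖ + ‖P n (s - y) (P n s f) - P n s f‖
                + ‖P n s f - P n y f‖))) ?_ ?_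
        · have h1 : Tendsto (fun y => P n y f) (nhdsWithin s (Set.Icc 0 s))
              (nhds (P n s f)) := horbL n f s t hs.1 hs.2
          have hnrm : Tendsto (fun y => ‖P n y f - P n s f‖) (nhdsWithin s (Set.Icc 0 s))
              (nhds 0) := by exact norm_sub_tendsto_zero h1
          have hmapl : Tendsto (fun y => s - y) (nhdsWithin s (Set.Icc 0 s))
              (nhdsWithin 0 (Set.Ici (0:ℝ))) :=
            (hmapL s).mono_left (nhdsWithin_mono s Set.Icc_subset_Iic_self)
          have h2 : Tendsto (fun y => ‖P m (s - y) (P n s f) - P n s f‖)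
              (nhdsWithin s (Set.Icc 0 s)) (nhds 0) := by
            exact norm_sub_tendsto_zero (((hcont0 m (P n s f))).comp hmapl)
          have h3 : Tendsto (fun y => ‖P n (s - y) (P n s f) - P n s f‖)
              (nhdsWithin s (Set.Icc 0 s)) (nhds 0) := by
            exact norm_sub_tendsto_zero (((hcont0 n (P n s f))).comp hmapl)
          have h4 : Tendsto (fun y => ‖P n s f - P n y f‖) (nhdsWithin s (Set.Icc 0 s))
              (nhds 0) := by exact norm_sub_tendsto_zero' h1
          have hall := ((((hnrm.const_mul (E t)).add h2).add h4).add
            (((hnrm.const_mul (E t)).add h3).add h4)).const_mul (E t)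
          simpa using hall
        · refine eventually_nhdsWithin_of_forall ?_
          intro y hy
          have hys : 0 ≤ s - y := sub_nonneg.2 hy.2
          have hyst : s - y ≤ t := by
            have := hy.1; have := hs.2; linarith
          have hts : 0 ≤ t - s := sub_nonneg.2 hs.2
          have htst : t - s ≤ t := by have := hs.1; linarith
          have eu : P n s f = P n (s - y) (P n y f) := by
            have h := hlaw' n y (s - y) hy.1 hys f
            have h2 : s - y + y = s := by ring
            rwa [h2] at h
          have egy : P m (t - y) (P n y f) = P m (t - s) (P m (s - y) (P n y f)) := by
            have h := hlaw' m (s - y) (t - s) hys hts (P n y f)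
            have h2 : t - s + (s - y) = t - y := by ring
            rwa [h2] at h
          have hgid : (fun s' => P m (t - s') (P n s' f)) y - P m (t - s) (P n s f)
              = P m (t - s) (P m (s - y) (P n y f) - P n (s - y) (P n y f)) := by
            show P m (t - y) (P n y f) - P m (t - s) (P n s f) = _
            rw [egy, ← map_sub]
            congr 1
            rw [eu]
          have hbnd : ∀ k : ℕ, ‖P k (s - y) (P n y f) - P n s f‖
              ≤ E t * ‖P n y f - P n s f‖ + ‖P k (s - y) (P n s f) - P n s f‖
                + ‖P n s f - P n y f‖ := by
            intro k
            have hdec2 : P k (s - y) (P n y f) - P n s f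
                = P k (s - y) (P n y f - P n s f) + (P k (s - y) (P n s f) - P n s f) := by
              rw [map_sub]; abel
            have hstep : ‖P k (s - y) (P n y f - P n s f)‖ ≤ E t * ‖P n y f - P n s f‖ :=
              hEbd k (s - y) t hys hyst (P n y f - P n s f)
            calc ‖P k (s - y) (P n y f) - P n s f‖
                ≤ ‖P k (s - y) (P n y f - P n s f)‖ + ‖P k (s - y) (P n s f) - P n s f‖ := by
                  rw [hdec2]; exact norm_add_le _ _
              _ ≤ E t * ‖P n y f - P n s f‖ + ‖P k (s - y) (P n s f) - P n s f‖
                  + ‖P n s f - P n y f‖ := by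
                  have := norm_nonneg (P n s f - P n y f)
                  linarith
          have hsum : ‖P m (s - y) (P n y f) - P n (s - y) (P n y f)‖
              ≤ ‖P m (s - y) (P n y f) - P n s f‖ + ‖P n (s - y) (P n y f) - P n s f‖ := by
            have : P m (s - y) (P n y f) - P n (s - y) (P n y f)
                = (P m (s - y) (P n y f) - P n s f) - (P n (s - y) (P n y f) - P n s f) := by
              abel
            rw [this]
            exact norm_sub_le _ _
          calc ‖(fun s' => P m (t - s') (P n s' f)) y - P m (t - s) (P n s f)‖
              = ‖P m (t - s) (P m (s - y) (P n y f) - P n (s - y) (P n y f))‖ := by rw [hgid]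
            _ ≤ E t * ‖P m (s - y) (P n y f) - P n (s - y) (P n y f)‖ :=
                hEbd m (t - s) t hts htst _
            _ ≤ E t * ((E t * ‖P n y f - P n s f‖ + ‖P m (s - y) (P n s f) - P n s f‖
                  + ‖P n s f - P n y f‖)
                + (E t * ‖P n y f - P n s f‖ + ‖P n (s - y) (P n s f) - P n s f‖
                  + ‖P n s f - P n y f‖)) := by
                refine mul_le_mul_of_nonneg_left ?_ (hEpos t).le
                have h1 := hbnd m
                have h2 := hbnd n
                linarith [hsum]
      have hR : Tendsto (fun s' => P m (t - s') (P n s' f)) (nhdsWithin s (Set.Icc s t))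
          (nhds (P m (t - s) (P n s f))) := by
        refine tendsto_of_norm_bound
          (g := fun y => E t * (‖P n (y - s) (P n s f) - P n s f‖
            + ‖P m (y - s) (P n s f) - P n s f‖)) ?_ ?_
        · have hmapr : Tendsto (fun y => y - s) (nhdsWithin s (Set.Icc s t))
              (nhdsWithin 0 (Set.Ici (0:ℝ))) :=
            (hmapRc s).mono_left (nhdsWithin_mono s Set.Icc_subset_Ici_self)
          have h1 : Tendsto (fun y => ‖P n (y - s) (P n s f) - P n s f‖)
              (nhdsWithin s (Set.Icc s t)) (nhds 0) := by
            exact norm_sub_tendsto_zero ((hcont0 n (P n s f)).comp hmapr)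
          have h2 : Tendsto (fun y => ‖P m (y - s) (P n s f) - P n s f‖)
              (nhdsWithin s (Set.Icc s t)) (nhds 0) := by
            exact norm_sub_tendsto_zero ((hcont0 m (P n s f)).comp hmapr)
          simpa using (h1.add h2).const_mul (E t)
        · refine eventually_nhdsWithin_of_forall ?_
          intro y hy
          have hys : 0 ≤ y - s := sub_nonneg.2 hy.1
          have hty : 0 ≤ t - y := sub_nonneg.2 hy.2
          have htyt : t - y ≤ t := by have := hs.1; have := hy.1; linarith
          have e1 : P n y f = P n (y - s) (P n s f) := by
            have h := hlaw' n s (y - s) hs.1 hys f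
            rwa [sub_add_cancel] at h
          have e2 : P m (t - s) (P n s f) = P m (t - y) (P m (y - s) (P n s f)) := by
            have h := hlaw' m (y - s) (t - y) hys hty (P n s f)
            have h2 : t - y + (y - s) = t - s := by ring
            rwa [h2] at h
          have hgid : (fun s' => P m (t - s') (P n s' f)) y - P m (t - s) (P n s f)
              = P m (t - y) (P n (y - s) (P n s f) - P m (y - s) (P n s f)) := by
            show P m (t - y) (P n y f) - P m (t - s) (P n s f) = _
            rw [e1, e2, ← map_sub]
          have hsum : ‖P n (y - s) (P n s f) - P m (y - s) (P n s f)‖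
              ≤ ‖P n (y - s) (P n s f) - P n s f‖ + ‖P m (y - s) (P n s f) - P n s f‖ := by
            have : P n (y - s) (P n s f) - P m (y - s) (P n s f)
                = (P n (y - s) (P n s f) - P n s f) - (P m (y - s) (P n s f) - P n s f) := by
              abel
            rw [this]; exact norm_sub_le _ _
          calc ‖(fun s' => P m (t - s') (P n s' f)) y - P m (t - s) (P n s f)‖
              = ‖P m (t - y) (P n (y - s) (P n s f) - P m (y - s) (P n s f))‖ := by rw [hgid]
            _ ≤ E t * ‖P n (y - s) (P n s f) - P m (y - s) (P n s f)‖ :=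
                hEbd m (t - y) t hty htyt _
            _ ≤ _ := mul_le_mul_of_nonneg_left hsum (hEpos t).le
      exact Tendsto.mono_left (tendsto_sup.2 ⟨hL, hR⟩) hsplit
    -- right derivative of the interpolation map
    have hgderiv : ∀ s ∈ Set.Ico 0 t, HasDerivWithinAt (fun s' => P m (t - s') (P n s' f))
        (P m (t - s) (A n (P n s f) - A m (P n s f))) (Set.Ici s) s := by
      intro s hs
      have hs0 : 0 ≤ s := hs.1
      have hst : s < t := hs.2
      have husD : P n s f ∈ D := hinv n s hs0 f hfD
      rw [hasDerivWithinAt_iff_tendsto_slope, Set.Ici_sdiff_left]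
      have hev : ∀ᶠ y in nhdsWithin s (Set.Ioi s), s < y ∧ y < t := by
        filter_upwards [eventually_mem_nhdsWithin,
          eventually_nhdsWithin_of_eventually_nhds (eventually_lt_nhds hst)] with y h1 h2
        exact ⟨h1, h2⟩
      refine tendsto_of_norm_bound
        (g := fun y => E t *
          (‖((y - s)⁻¹ • (P n (y - s) (P n s f) - P n s f)
              - (y - s)⁻¹ • (P m (y - s) (P n s f) - P n s f))
            - (A n (P n s f) - A m (P n s f))‖
          + ‖(A n (P n s f) - A m (P n s f))
              - P m (y - s) (A n (P n s f) - A m (P n s f))‖)) ?_ ?_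
      · have hq : Tendsto (fun y => (y - s)⁻¹ • (P n (y - s) (P n s f) - P n s f)
            - (y - s)⁻¹ • (P m (y - s) (P n s f) - P n s f))
            (nhdsWithin s (Set.Ioi s)) (nhds (A n (P n s f) - A m (P n s f))) := by
          have h1 := (hgen n (P n s f) husD).comp (hmapR s)
          have h2 := (hgen m (P n s f) husD).comp (hmapR s)
          exact h1.sub h2
        have hq0 : Tendsto (fun y => ‖((y - s)⁻¹ • (P n (y - s) (P n s f) - P n s f)
            - (y - s)⁻¹ • (P m (y - s) (P n s f) - P n s f))
            - (A n (P n s f) - A m (P n s f))‖) (nhdsWithin s (Set.Ioi s)) (nhds 0) := by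
          exact norm_sub_tendsto_zero hq
        have hw0 : Tendsto (fun y => ‖(A n (P n s f) - A m (P n s f))
            - P m (y - s) (A n (P n s f) - A m (P n s f))‖)
            (nhdsWithin s (Set.Ioi s)) (nhds 0) := by
          have h1 : Tendsto (fun y => P m (y - s) (A n (P n s f) - A m (P n s f)))
              (nhdsWithin s (Set.Ioi s)) (nhds (A n (P n s f) - A m (P n s f))) :=
            (hcont0 m _).comp
              ((hmapR s).mono_right (nhdsWithin_mono 0 Set.Ioi_subset_Ici_self))
          exact norm_sub_tendsto_zero' h1
        simpa using (hq0.add hw0).const_mul (E t)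
      · filter_upwards [hev] with y hy
        obtain ⟨hsy, hyt⟩ := hy
        have hys : 0 < y - s := sub_pos.2 hsy
        have hty : 0 ≤ t - y := by linarith
        have htyt : t - y ≤ t := by linarith
        have e1 : P n y f = P n (y - s) (P n s f) := by
          have h := hlaw' n s (y - s) hs0 hys.le f
          rwa [sub_add_cancel] at h
        have e2 : ∀ v : Z, P m (t - s) v = P m (t - y) (P m (y - s) v) := by
          intro v
          have h := hlaw' m (y - s) (t - y) hys.le hty v
          have h2 : t - y + (y - s) = t - s := by ring
          rwa [h2] at h
        have hslope : slope (fun s' => P m (t - s') (P n s' f)) s y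
            = P m (t - y) ((y - s)⁻¹ • (P n (y - s) (P n s f) - P m (y - s) (P n s f))) := by
          rw [slope_def_module]
          have hgid : (fun s' => P m (t - s') (P n s' f)) y
              - (fun s' => P m (t - s') (P n s' f)) s
              = P m (t - y) (P n (y - s) (P n s f) - P m (y - s) (P n s f)) := by
            show P m (t - y) (P n y f) - P m (t - s) (P n s f) = _
            rw [e1, e2 (P n s f), ← map_sub]
          rw [hgid, _root_.map_smul]
        have hqid : (y - s)⁻¹ • (P n (y - s) (P n s f) - P m (y - s) (P n s f))
            = ((y - s)⁻¹ • (P n (y - s) (P n s f) - P n s f)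
              - (y - s)⁻¹ • (P m (y - s) (P n s f) - P n s f)) := by
          rw [← smul_sub]
          congr 1
          abel
        have hfinal : slope (fun s' => P m (t - s') (P n s' f)) s y
            - P m (t - s) (A n (P n s f) - A m (P n s f))
            = P m (t - y) ((((y - s)⁻¹ • (P n (y - s) (P n s f) - P n s f)
                - (y - s)⁻¹ • (P m (y - s) (P n s f) - P n s f))
              - (A n (P n s f) - A m (P n s f)))
              + ((A n (P n s f) - A m (P n s f))
                - P m (y - s) (A n (P n s f) - A m (P n s f)))) := by
          rw [hslope, hqid, e2 (A n (P n s f) - A m (P n s f)), ← map_sub]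
          congr 1
          abel
        calc ‖slope (fun s' => P m (t - s') (P n s' f)) s y
            - P m (t - s) (A n (P n s f) - A m (P n s f))‖
            = ‖P m (t - y) (_)‖ := by rw [hfinal]
          _ ≤ E t * ‖(((y - s)⁻¹ • (P n (y - s) (P n s f) - P n s f)
                - (y - s)⁻¹ • (P m (y - s) (P n s f) - P n s f))
              - (A n (P n s f) - A m (P n s f)))
              + ((A n (P n s f) - A m (P n s f))
                - P m (y - s) (A n (P n s f) - A m (P n s f)))‖ :=
              hEbd m (t - y) t hty htyt _
          _ ≤ _ := mul_le_mul_of_nonneg_left (norm_add_le _ _) (hEpos t).le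
    -- bound on the right derivative
    have hgbound : ∀ s ∈ Set.Ico 0 t, ‖P m (t - s) (A n (P n s f) - A m (P n s f))‖
        ≤ E t * (a n m * (MD * Real.exp (|ωD| * t) * nD f)) := by
      intro s hs
      have hty : 0 ≤ t - s := sub_nonneg.2 hs.2.le
      have htyt : t - s ≤ t := by have := hs.1; linarith
      refine (hEbd m (t - s) t hty htyt _).trans ?_
      exact mul_le_mul_of_nonneg_left (hwbd s ⟨hs.1, hs.2.le⟩) (hEpos t).le
    have hMVT := norm_image_sub_le_of_norm_deriv_right_le_segment hgcont hgderiv hgbound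
      t (Set.mem_Icc.2 ⟨ht, le_rfl⟩)
    simp only [sub_self, sub_zero, hPid] at hMVT
    calc ‖P n t f - P m t f‖
        ≤ E t * (a n m * (MD * Real.exp (|ωD| * t) * nD f)) * t := hMVT
      _ = Cfun t * a n m * nD f := by simp only [hE, hCfun]; ring
    -- extraction of smallness of a
  have haN : ∀ δ : ℝ, 0 < δ → ∃ N : ℕ, ∀ k ≥ N, ∀ l ≥ N, |a k l| ≤ δ := by
    intro δ hδ
    have h := Metric.tendsto_nhds.mp ha0 δ hδ
    rw [eventually_atTop_prod_self'] at h
    obtain ⟨N, hN⟩ := h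
    refine ⟨N, fun k hk l hl => ?_⟩
    have h2 := hN k hk l hl
    simp only [Real.dist_eq, sub_zero] at h2
    exact h2.le
  have hdense' : ∀ (f : Z) (δ : ℝ), 0 < δ → ∃ h ∈ D, ‖f - h‖ ≤ δ := by
    intro f δ hδ
    obtain ⟨h, hmem⟩ := Metric.dense_iff.mp hDdense f δ hδ
    refine ⟨h, hmem.2, ?_⟩
    rw [← dist_eq_norm, dist_comm]
    exact (Metric.mem_ball.mp hmem.1).le
  -- Cauchy sequences
  have hcauchy : ∀ t : ℝ, 0 ≤ t → ∀ f : Z, CauchySeq fun k => P k t f := by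
    intro t ht f
    rw [Metric.cauchySeq_iff]
    intro ε hε
    have hMe : 0 < M * Real.exp (ω * t) := by positivity
    obtain ⟨h, hhD, hfh⟩ := hdense' f (ε / (4 * (M * Real.exp (ω * t) + 1)))
      (div_pos hε (by nlinarith))
    have hXnn : 0 ≤ Cfun t * nD h := mul_nonneg (hCnonneg t ht) (hnD0 h hhD)
    obtain ⟨N, hN⟩ := haN (ε / (4 * (Cfun t * nD h + 1))) (div_pos hε (by nlinarith))
    refine ⟨N, fun k hk l hl => ?_⟩
    rw [dist_eq_norm]
    have hident : P k t f - P l t f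
        = P k t (f - h) + (P k t h - P l t h) + P l t (h - f) := by
      simp only [map_sub]; abel
    have hb1 : ‖P k t (f - h)‖ ≤ ε / 4 := by
      refine (hgbop k t ht (f - h)).trans ?_
      refine (mul_le_mul_of_nonneg_left hfh hMe.le).trans ?_
      exact div_bound_aux hMe.le hε (by norm_num)
    have hb3 : ‖P l t (h - f)‖ ≤ ε / 4 := by
      refine (hgbop l t ht (h - f)).trans ?_
      rw [norm_sub_rev]
      refine (mul_le_mul_of_nonneg_left hfh hMe.le).trans ?_
      exact div_bound_aux hMe.le hε (by norm_num)
    have hb2 : ‖P k t h - P l t h‖ ≤ ε / 4 := by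
      refine (hkey k l t ht h hhD).trans ?_
      have hakl : a k l ≤ ε / (4 * (Cfun t * nD h + 1)) :=
        (le_abs_self _).trans (hN k hk l hl)
      have h1 : Cfun t * a k l * nD h
          ≤ Cfun t * (ε / (4 * (Cfun t * nD h + 1))) * nD h :=
        mul_le_mul_of_nonneg_right (mul_le_mul_of_nonneg_left hakl (hCnonneg t ht))
          (hnD0 h hhD)
      have h2 : Cfun t * (ε / (4 * (Cfun t * nD h + 1))) * nD h
          = (Cfun t * nD h) * (ε / (4 * (Cfun t * nD h + 1))) := by ring
      have h3 : (Cfun t * nD h) * (ε / (4 * (Cfun t * nD h + 1))) ≤ ε / 4 :=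
        div_bound_aux hXnn hε (by norm_num)
      linarith
    calc ‖P k t f - P l t f‖
        ≤ ‖P k t (f - h)‖ + ‖P k t h - P l t h‖ + ‖P l t (h - f)‖ := by
          rw [hident]; exact norm_add3_le _ _ _
      _ ≤ ε / 4 + ε / 4 + ε / 4 := by linarith
      _ < ε := by linarith
  -- construction of the limit operators
  have hexist : ∀ t : ℝ, ∃ Q : Z →L[ℝ] Z, 0 ≤ t →
      ∀ f : Z, Tendsto (fun k => P k t f) atTop (nhds (Q f)) := by
    intro t
    by_cases ht : 0 ≤ t
    swap
    · exact ⟨ContinuousLinearMap.id ℝ Z, fun ht' => absurd ht' ht⟩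
    have hQf : ∀ f : Z, Tendsto (fun k => P k t f) atTop
        (nhds (limUnder atTop fun k => P k t f)) := fun f => (hcauchy t ht f).tendsto_limUnder
    refine ⟨LinearMap.mkContinuous
      { toFun := fun f => limUnder atTop fun k => P k t f
        map_add' := fun f g => tendsto_nhds_unique (hQf (f + g))
          (((hQf f).add (hQf g)).congr fun k => (map_add (P k t) f g).symm)
        map_smul' := fun c f => by
          have h2 : Tendsto (fun k => P k t (c • f)) atTop
              (nhds (c • limUnder atTop fun k => P k t f)) :=
            ((hQf f).const_smul c).congr fun k => ((P k t).map_smul c f).symm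
          simpa using tendsto_nhds_unique (hQf (c • f)) h2 }
      (M * Real.exp (ω * t)) (fun f => ?_), fun _ => hQf⟩
    exact le_of_tendsto (hQf f).norm (Filter.Eventually.of_forall fun k => hgbop k t ht f)
  choose Pinf hmain using hexist
  have hPinfnorm : ∀ t, 0 ≤ t → ∀ f : Z, ‖Pinf t f‖ ≤ M * Real.exp (ω * t) * ‖f‖ :=
    fun t ht f => le_of_tendsto (hmain t ht f).norm
      (Filter.Eventually.of_forall fun k => hgbop k t ht f)
  have hrate : ∀ t, 0 ≤ t → ∀ h ∈ D, ∀ (k : ℕ) (δ : ℝ), (∀ l ≥ k, a k l ≤ δ) →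
      ‖P k t h - Pinf t h‖ ≤ Cfun t * δ * nD h := by
    intro t ht h hhD k δ hδ
    have h1 : Tendsto (fun l => P k t h - P l t h) atTop (nhds (P k t h - Pinf t h)) :=
      tendsto_const_nhds.sub (hmain t ht h)
    refine le_of_tendsto h1.norm ?_
    filter_upwards [eventually_ge_atTop k] with l hl
    refine (hkey k l t ht h hhD).trans ?_
    exact mul_le_mul_of_nonneg_right
      (mul_le_mul_of_nonneg_left (hδ l hl) (hCnonneg t ht)) (hnD0 h hhD)
  refine ⟨Pinf, ?_, ?_, ?_, ?_, ?_, ?_, ?_, ?_⟩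
  · -- Pinf 0 = id
    apply ContinuousLinearMap.ext
    intro f
    have h2 : Tendsto (fun k : ℕ => P k 0 f) atTop (nhds f) :=
      tendsto_const_nhds.congr fun k => (hPid k f).symm
    simpa using tendsto_nhds_unique (hmain 0 le_rfl f) h2
  · -- semigroup law
    intro s t hs ht
    apply ContinuousLinearMap.ext
    intro f
    have h1 : Tendsto (fun k => P k (t + s) f) atTop (nhds (Pinf (t + s) f)) :=
      hmain (t + s) (by linarith) f
    have h2 : Tendsto (fun k => P k t (P k s f)) atTop (nhds (Pinf t (Pinf s f))) := by
      refine tendsto_of_norm_bound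
        (g := fun k => M * Real.exp (ω * t) * ‖P k s f - Pinf s f‖
          + ‖P k t (Pinf s f) - Pinf t (Pinf s f)‖) ?_ ?_
      · have hA := (norm_sub_tendsto_zero (hmain s hs f)).const_mul (M * Real.exp (ω * t))
        have hB := norm_sub_tendsto_zero (hmain t ht (Pinf s f))
        simpa using hA.add hB
      · refine Filter.Eventually.of_forall fun k => ?_
        have hx : P k t (P k s f) - Pinf t (Pinf s f)
            = P k t (P k s f - Pinf s f) + (P k t (Pinf s f) - Pinf t (Pinf s f)) := by
          rw [map_sub]; abel
        rw [hx]
        refine (norm_add_le _ _).trans ?_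
        exact add_le_add_left (hgbop k t ht (P k s f - Pinf s f)) _
    have h3 : Tendsto (fun k => P k (t + s) f) atTop (nhds (Pinf t (Pinf s f))) :=
      h2.congr fun k => (hlaw' k s t hs ht f).symm
    have h5 := tendsto_nhds_unique h1 h3
    simpa using h5
  · -- strong continuity at 0+
    intro f
    rw [← tendsto_sub_nhds_zero_iff, NormedAddCommGroup.tendsto_nhds_zero]
    intro ε hε
    have hMe : 0 < M * Real.exp |ω| := by positivity
    obtain ⟨h, hhD, hfh⟩ := hdense' f (ε / (4 * (M * Real.exp |ω| + 1)))
      (div_pos hε (by nlinarith))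
    have hc1pos : 0 < Cfun 1 :=
      mul_pos (mul_pos (mul_pos hM0 (Real.exp_pos _)) (mul_pos hMD0 (Real.exp_pos _))) one_pos
    have hXnn : 0 ≤ Cfun 1 * nD h := mul_nonneg hc1pos.le (hnD0 h hhD)
    obtain ⟨N, hN⟩ := haN (ε / (4 * (Cfun 1 * nD h + 1))) (div_pos hε (by nlinarith))
    have hPNh := Metric.tendsto_nhds.mp (hcont N h) (ε / 4) (by positivity)
    have hIoc : Set.Ioc (0:ℝ) 1 ∈ nhdsWithin 0 (Set.Ioi (0:ℝ)) :=
      Ioc_mem_nhdsGT_of_mem (Set.mem_Ico.mpr ⟨le_refl 0, one_pos⟩)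
    filter_upwards [hPNh, hIoc] with t h4 htI
    obtain ⟨ht0, ht1⟩ := htI
    have hx : Pinf t f - f
        = Pinf t (f - h) + (Pinf t h - P N t h) + (P N t h - h) + (h - f) := by
      rw [map_sub]; abel
    have hb1 : ‖Pinf t (f - h)‖ ≤ ε / 4 := by
      refine (hPinfnorm t ht0.le (f - h)).trans ?_
      have he : Real.exp (ω * t) ≤ Real.exp |ω| := by
        refine Real.exp_le_exp.2 ?_
        nlinarith [mul_le_mul_of_nonneg_right (le_abs_self ω) ht0.le,
          mul_le_mul_of_nonneg_left ht1 (abs_nonneg ω)]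
      have h5 : M * Real.exp (ω * t) * ‖f - h‖ ≤ M * Real.exp |ω| * ‖f - h‖ :=
        mul_le_mul_of_nonneg_right (mul_le_mul_of_nonneg_left he hM0.le) (norm_nonneg _)
      refine h5.trans ?_
      refine (mul_le_mul_of_nonneg_left hfh hMe.le).trans ?_
      exact div_bound_aux hMe.le hε (by norm_num)
    have hb2 : ‖Pinf t h - P N t h‖ ≤ ε / 4 := by
      rw [norm_sub_rev]
      have h6 := hrate t ht0.le h hhD N _
        (fun l hl => (le_abs_self _).trans (hN N le_rfl l hl))
      refine h6.trans ?_
      have hdpos : (0:ℝ) < 4 * (Cfun 1 * nD h + 1) := by nlinarith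
      have hd : 0 ≤ ε / (4 * (Cfun 1 * nD h + 1)) := (div_pos hε hdpos).le
      have h7 : Cfun t * (ε / (4 * (Cfun 1 * nD h + 1))) * nD h
          ≤ Cfun 1 * (ε / (4 * (Cfun 1 * nD h + 1))) * nD h :=
        mul_le_mul_of_nonneg_right
          (mul_le_mul_of_nonneg_right (hCmono 1 t ht0.le ht1) hd) (hnD0 h hhD)
      have h8 : Cfun 1 * (ε / (4 * (Cfun 1 * nD h + 1))) * nD h
          = (Cfun 1 * nD h) * (ε / (4 * (Cfun 1 * nD h + 1))) := by ring
      have h9 : (Cfun 1 * nD h) * (ε / (4 * (Cfun 1 * nD h + 1))) ≤ ε / 4 :=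
        div_bound_aux hXnn hε (by norm_num)
      linarith
    have hb3 : ‖P N t h - h‖ < ε / 4 := by
      rw [← dist_eq_norm]; exact h4
    have hb4 : ‖h - f‖ ≤ ε / 4 := by
      rw [norm_sub_rev]
      refine hfh.trans ?_
      rw [div_le_div_iff₀ (by nlinarith) (by norm_num)]
      nlinarith
    calc ‖Pinf t f - f‖
        = ‖Pinf t (f - h) + (Pinf t h - P N t h) + (P N t h - h) + (h - f)‖ := by rw [hx]
      _ ≤ ‖Pinf t (f - h)‖ + ‖Pinf t h - P N t h‖ + ‖P N t h - h‖ + ‖h - f‖ :=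
          norm_add4_le _ _ _ _
      _ < ε := by linarith
  · -- growth bound
    intro t ht
    exact (Pinf t).opNorm_le_bound (by positivity) fun f => hPinfnorm t ht f
  · -- convergence, fixed f, uniform on [0, T]
    intro f T hT ε hε
    obtain ⟨h, hhD, hfh⟩ := hdense' f (ε / (4 * (E T + 1)))
      (div_pos hε (by nlinarith [hEpos T]))
    have hcT : 0 < Cfun T :=
      mul_pos (mul_pos (mul_pos hM0 (Real.exp_pos _)) (mul_pos hMD0 (Real.exp_pos _))) hT
    have hXnn : 0 ≤ Cfun T * nD h := mul_nonneg hcT.le (hnD0 h hhD)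
    obtain ⟨N, hN⟩ := haN (ε / (4 * (Cfun T * nD h + 1))) (div_pos hε (by nlinarith))
    refine ⟨N, fun k hk t htI => ?_⟩
    obtain ⟨ht0, htT⟩ := htI
    have hx : P k t f - Pinf t f
        = P k t (f - h) + (P k t h - Pinf t h) + Pinf t (h - f) := by
      simp only [map_sub]; abel
    have hb1 : ‖P k t (f - h)‖ ≤ ε / 4 := by
      refine (hEbd k t T ht0 htT (f - h)).trans ?_
      refine (mul_le_mul_of_nonneg_left hfh (hEpos T).le).trans ?_
      exact div_bound_aux (hEpos T).le hε (by norm_num)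
    have hb3 : ‖Pinf t (h - f)‖ ≤ ε / 4 := by
      have h8 : ‖Pinf t (h - f)‖ ≤ E T * ‖f - h‖ := by
        refine (hPinfnorm t ht0 (h - f)).trans ?_
        rw [norm_sub_rev]
        have h9 : Real.exp (ω * t) ≤ Real.exp (|ω| * T) :=
          Real.exp_le_exp.2 (by nlinarith [mul_le_mul_of_nonneg_right (le_abs_self ω) ht0,
            mul_le_mul_of_nonneg_left htT (abs_nonneg ω)])
        simp only [hE]
        exact mul_le_mul_of_nonneg_right (mul_le_mul_of_nonneg_left h9 hM0.le) (norm_nonneg _)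
      refine h8.trans ?_
      refine (mul_le_mul_of_nonneg_left hfh (hEpos T).le).trans ?_
      exact div_bound_aux (hEpos T).le hε (by norm_num)
    have hb2 : ‖P k t h - Pinf t h‖ ≤ ε / 4 := by
      have h6 := hrate t ht0 h hhD k _
        (fun l hl => (le_abs_self _).trans (hN k hk l (hk.trans hl)))
      refine h6.trans ?_
      have hdpos : (0:ℝ) < 4 * (Cfun T * nD h + 1) := by nlinarith
      have hd : 0 ≤ ε / (4 * (Cfun T * nD h + 1)) := (div_pos hε hdpos).le
      have h7 : Cfun t * (ε / (4 * (Cfun T * nD h + 1))) * nD h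
          ≤ Cfun T * (ε / (4 * (Cfun T * nD h + 1))) * nD h :=
        mul_le_mul_of_nonneg_right
          (mul_le_mul_of_nonneg_right (hCmono T t ht0 htT) hd) (hnD0 h hhD)
      have h8 : Cfun T * (ε / (4 * (Cfun T * nD h + 1))) * nD h
          = (Cfun T * nD h) * (ε / (4 * (Cfun T * nD h + 1))) := by ring
      have h9 : (Cfun T * nD h) * (ε / (4 * (Cfun T * nD h + 1))) ≤ ε / 4 :=
        div_bound_aux hXnn hε (by norm_num)
      linarith
    calc ‖P k t f - Pinf t f‖
        = ‖P k t (f - h) + (P k t h - Pinf t h) + Pinf t (h - f)‖ := by rw [hx]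
      _ ≤ ‖P k t (f - h)‖ + ‖P k t h - Pinf t h‖ + ‖Pinf t (h - f)‖ := norm_add3_le _ _ _
      _ ≤ ε := by linarith
  · -- convergence uniform on bounded sets of D
    intro T hT K hK ε hε
    have hcT : 0 < Cfun T :=
      mul_pos (mul_pos (mul_pos hM0 (Real.exp_pos _)) (mul_pos hMD0 (Real.exp_pos _))) hT
    have hXnn : 0 ≤ Cfun T * K := mul_nonneg hcT.le hK.le
    obtain ⟨N, hN⟩ := haN (ε / (1 * (Cfun T * K + 1))) (div_pos hε (by nlinarith))
    refine ⟨N, fun k hk f hfD hfK t htI => ?_⟩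
    have hd : 0 ≤ ε / (1 * (Cfun T * K + 1)) := (div_pos hε (by nlinarith)).le
    have h6 := hrate t htI.1 f hfD k _
      (fun l hl => (le_abs_self _).trans (hN k hk l (hk.trans hl)))
    refine h6.trans ?_
    calc Cfun t * (ε / (1 * (Cfun T * K + 1))) * nD f
        ≤ (Cfun T * (ε / (1 * (Cfun T * K + 1)))) * K := by
          refine mul_le_mul ?_ hfK (hnD0 f hfD) (mul_nonneg hcT.le hd)
          exact mul_le_mul_of_nonneg_right (hCmono T t htI.1 htI.2) hd
      _ = (Cfun T * K) * (ε / (1 * (Cfun T * K + 1))) := by ring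
      _ ≤ ε / 1 := div_bound_aux hXnn hε one_pos
      _ = ε := div_one ε
  · -- quantitative comparison
    exact ⟨Cfun, fun T hT => ⟨Cfun T, fun t htI => hCmono T t htI.1 htI.2⟩,
      fun k l t ht f hfD => hkey k l t ht f hfD⟩
  · -- positivity (generalized Feller property)
    intro X _ ρ ι hadm hadd hsmul hmem hnorm hsurj hpos t ht f hf x
    have hsub : ∀ (u v : Z) (y : X), ι (u - v) y = ι u y - ι v y := by
      intro u v y
      have h1 : u - v = u + (-1 : ℝ) • v := by
        rw [neg_one_smul]; exact sub_eq_add_neg u v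
      rw [h1, hadd, hsmul]
      simp only [Pi.add_apply, Pi.smul_apply, smul_eq_mul]
      ring
    have hpt : ∀ (g : Z) (y : X), |ι g y| ≤ ‖g‖ * ρ y := by
      intro g y
      obtain ⟨Cg, hCg⟩ := (hmem g).1
      have hbddA : BddAbove (Set.range fun y' => (ρ y')⁻¹ * |ι g y'|) := by
        refine ⟨Cg, ?_⟩
        rintro r ⟨y', rfl⟩
        have hρ := hadm.1 y'
        calc (ρ y')⁻¹ * |ι g y'| ≤ (ρ y')⁻¹ * (Cg * ρ y') :=
              mul_le_mul_of_nonneg_left (hCg y') (inv_nonneg.2 hρ.le)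
          _ = Cg := by field_simp
      have hle : (ρ y)⁻¹ * |ι g y| ≤ GenFeller.rnorm ρ (ι g) :=
        le_csSup hbddA ⟨y, rfl⟩
      rw [hnorm g] at hle
      have hρ := hadm.1 y
      calc |ι g y| = ρ y * ((ρ y)⁻¹ * |ι g y|) := by field_simp
        _ ≤ ρ y * ‖g‖ := mul_le_mul_of_nonneg_left hle hρ.le
        _ = ‖g‖ * ρ y := mul_comm _ _
    have hlim : Tendsto (fun k => -(‖P k t f - Pinf t f‖ * ρ x)) atTop (nhds 0) := by
      have h1 := norm_sub_tendsto_zero (hmain t ht f)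
      have h2 := h1.mul_const (ρ x)
      simpa using h2.neg
    refine le_of_tendsto hlim (Filter.Eventually.of_forall fun k => ?_)
    have h3 : ι (Pinf t f) x = ι (P k t f) x - ι (P k t f - Pinf t f) x := by
      rw [hsub (P k t f) (Pinf t f) x]; ring
    have h4 : 0 ≤ ι (P k t f) x := hpos k t ht f hf x
    have h5 := abs_le.mp (hpt (P k t f - Pinf t f) x)
    rw [h3]
    linarith [h5.2]
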